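/- Let A be a closed subalgebra of B(H) and let x ∈ A with x + x* ≥ 0. Set y = x(I + x)⁻¹ (a well-defined element of the closed algebra generated by x). Then the closed subalgebra of B(H) generated by x equals the closed subalgebra generated by y; in particular x = y(I - y)⁻¹ with (I - y)⁻¹ belonging to the closed unital algebra generated by y. -/

import Mathlib

open ContinuousLinearMap

section Aux

variable {H : Type*} [NormedAddCommGroup H] [InnerProductSpace ℂ H] [CompleteSpace H]

local notation "⟪" a ", " b "⟫" => @inner ℂ _ _ a b

/-- Key lemma: if the numerical range of `z` is bounded below by `c‖v‖²` with `c > 0`,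
then `z` is invertible and its inverse lies in the closed unital algebra generated by `z`. -/
lemma key_inverse (z : H →L[ℂ] H) (c : ℝ) (hc : 0 < c)
    (h : ∀ v : H, c * ‖v‖ ^ 2 ≤ RCLike.re ⟪z v, v⟫) :
    IsUnit z ∧ Ring.inverse z ∈
      (Algebra.adjoin ℂ ({z} : Set (H →L[ℂ] H))).topologicalClosure := by
  set N : ℝ := ‖z‖ with hN
  have hN0 : 0 ≤ N := norm_nonneg z
  set ε : ℝ := c / (N ^ 2 + c ^ 2) with hε
  have hden : 0 < N ^ 2 + c ^ 2 := by positivity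
  have hε0 : 0 < ε := by positivity
  set D : ℝ := 1 - 2 * ε * c + ε ^ 2 * N ^ 2 with hD
  have hD1 : D < 1 := by
    have h1 : ε * N ^ 2 < 2 * c := by
      rw [hε, div_mul_eq_mul_div, div_lt_iff₀ hden]
      nlinarith
    have : ε * (ε * N ^ 2) < ε * (2 * c) := by
      exact mul_lt_mul_of_pos_left h1 hε0
    nlinarith
  set t : H →L[ℂ] H := 1 - (ε : ℂ) • z with htdef
  have ht : ‖t‖ < 1 := by
    have hb : ‖t‖ ≤ Real.sqrt (max D 0) := by
      apply opNorm_le_bound t (Real.sqrt_nonneg _)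
      intro v
      have hv2 : ‖t v‖ ^ 2 ≤ max D 0 * ‖v‖ ^ 2 := by
        have htv : t v = v - (ε : ℂ) • z v := by
          simp [htdef, sub_apply, smul_apply]
        rw [htv, @norm_sub_sq ℂ]
        have hre : RCLike.re ⟪v, (ε : ℂ) • z v⟫ = ε * RCLike.re ⟪z v, v⟫ := by
          rw [inner_smul_right]
          simp [inner_re_symm v (z v)]
        have hzb : ‖z v‖ ≤ N * ‖v‖ := z.le_opNorm v
        have h2 : ‖(ε : ℂ) • z v‖ ^ 2 ≤ ε ^ 2 * (N ^ 2 * ‖v‖ ^ 2) := by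
          rw [norm_smul]
          have : ‖(ε : ℂ)‖ = ε := by
            simp [Complex.norm_real, abs_of_pos hε0]
          rw [this]
          have := mul_le_mul hzb hzb (norm_nonneg _) (by positivity : (0:ℝ) ≤ N * ‖v‖)
          nlinarith [norm_nonneg (z v)]
        have h3 : c * ‖v‖ ^ 2 ≤ RCLike.re ⟪z v, v⟫ := h v
        have hDle : D * ‖v‖ ^ 2 ≤ max D 0 * ‖v‖ ^ 2 := by
          apply mul_le_mul_of_nonneg_right (le_max_left _ _) (by positivity)
        calc ‖v‖ ^ 2 - 2 * RCLike.re ⟪v, (ε : ℂ) • z v⟫ + ‖(ε : ℂ) • z v‖ ^ 2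
            ≤ ‖v‖ ^ 2 - 2 * (ε * (c * ‖v‖ ^ 2)) + ε ^ 2 * (N ^ 2 * ‖v‖ ^ 2) := by
              rw [hre]
              have := mul_le_mul_of_nonneg_left h3 hε0.le
              nlinarith
          _ = D * ‖v‖ ^ 2 := by ring
          _ ≤ max D 0 * ‖v‖ ^ 2 := hDle
      have := Real.sqrt_le_sqrt hv2
      rwa [Real.sqrt_sq (norm_nonneg _),
        Real.sqrt_mul (le_max_right D 0 |>.trans (le_refl _) |> fun _ => le_max_right D 0) ,
        Real.sqrt_sq (norm_nonneg v)] at this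
    have hlt : Real.sqrt (max D 0) < 1 := by
      have : Real.sqrt (max D 0) < Real.sqrt 1 :=
        Real.sqrt_lt_sqrt (le_max_right D 0) (max_lt hD1 one_pos)
      rwa [Real.sqrt_one] at this
    exact lt_of_le_of_lt hb hlt
  -- `1 - t = ε • z` is a unit
  have hsub : (1 : H →L[ℂ] H) - t = (ε : ℂ) • z := by
    rw [htdef]; abel
  set u0 : (H →L[ℂ] H)ˣ := Units.oneSub t ht with hu0
  have hu0v : (u0 : H →L[ℂ] H) = (ε : ℂ) • z := by
    rw [hu0, Units.val_oneSub, hsub]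
  have hεne : ((ε : ℂ)) ≠ 0 := by
    exact_mod_cast hε0.ne'
  -- build a unit structure on z
  have hmul1 : z * ((ε : ℂ) • (↑u0⁻¹ : H →L[ℂ] H)) = 1 := by
    rw [mul_smul_comm, ← smul_mul_assoc, ← hu0v, Units.mul_inv]
  have hmul2 : ((ε : ℂ) • (↑u0⁻¹ : H →L[ℂ] H)) * z = 1 := by
    rw [smul_mul_assoc, ← mul_smul_comm, ← hu0v, Units.inv_mul]
  set uz : (H →L[ℂ] H)ˣ := ⟨z, (ε : ℂ) • (↑u0⁻¹ : H →L[ℂ] H), hmul1, hmul2⟩ with huz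
  refine ⟨uz.isUnit, ?_⟩
  have hinv : Ring.inverse z = (ε : ℂ) • (↑u0⁻¹ : H →L[ℂ] H) := by
    have : Ring.inverse (uz : H →L[ℂ] H) = ↑uz⁻¹ := Ring.inverse_unit uz
    exact this
  have hu0inv : (↑u0⁻¹ : H →L[ℂ] H) = ∑' n : ℕ, t ^ n := rfl
  rw [hinv, hu0inv]
  set UA := Algebra.adjoin ℂ ({z} : Set (H →L[ℂ] H)) with hUA
  have htmem : t ∈ UA := by
    apply sub_mem (one_mem _)
    exact Subalgebra.smul_mem _ (Algebra.self_mem_adjoin_singleton ℂ z) _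
  have htsum : (∑' n : ℕ, t ^ n) ∈ closure (UA : Set (H →L[ℂ] H)) := by
    have hsummable : Summable fun n : ℕ => t ^ n := summable_geometric_of_norm_lt_one ht
    have htend := hsummable.hasSum.tendsto_sum_nat
    exact mem_closure_of_tendsto htend (Filter.Eventually.of_forall fun n =>
      sum_mem fun i _ => pow_mem htmem i)
  exact Subalgebra.smul_mem _ htsum _

/-- Multiplying an element of the nonunital adjoin by an element of the unital adjoin
stays in the nonunital adjoin. -/
lemma nonunital_mul_adjoin_mem (w a n : H →L[ℂ] H)
    (ha : a ∈ Algebra.adjoin ℂ ({w} : Set (H →L[ℂ] H)))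
    (hn : n ∈ NonUnitalAlgebra.adjoin ℂ ({w} : Set (H →L[ℂ] H))) :
    n * a ∈ NonUnitalAlgebra.adjoin ℂ ({w} : Set (H →L[ℂ] H)) := by
  induction ha using Algebra.adjoin_induction generalizing n with
  | mem b hb =>
      rcases hb with rfl
      exact mul_mem hn (NonUnitalAlgebra.self_mem_adjoin_singleton ℂ b)
  | algebraMap r =>
      have : n * algebraMap ℂ (H →L[ℂ] H) r = r • n := by
        rw [Algebra.algebraMap_eq_smul_one, mul_smul_comm, mul_one]
      rw [this]
      exact SMulMemClass.smul_mem r hn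
  | add b c hb hc ihb ihc =>
      rw [mul_add]
      exact add_mem (ihb n hn) (ihc n hn)
  | mul b c hb hc ihb ihc =>
      rw [← mul_assoc]
      exact ihc _ (ihb n hn)

end Aux

set_option maxHeartbeats 2000000 in
/-- Theorem 3.2 (Blecher–Read): if `x ∈ B(H)` with `x + x* ≥ 0` and
`y = x(I + x)⁻¹`, then the closed (nonunital) subalgebra of `B(H)` generated by
`x` equals the one generated by `y`; in particular `x = y(I - y)⁻¹`, with
`(I - y)⁻¹` belonging to the closed unital algebra generated by `y`. -/
theorem stmt19 {H : Type*} [NormedAddCommGroup H] [InnerProductSpace ℂ H]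
    [CompleteSpace H] (x y : H →L[ℂ] H) (hx : (x + adjoint x).IsPositive)
    (hy : y = x * Ring.inverse (1 + x)) :
    (NonUnitalAlgebra.adjoin ℂ ({x} : Set (H →L[ℂ] H))).topologicalClosure =
      (NonUnitalAlgebra.adjoin ℂ ({y} : Set (H →L[ℂ] H))).topologicalClosure ∧
    x = y * Ring.inverse (1 - y) ∧
    Ring.inverse (1 - y) ∈
      (Algebra.adjoin ℂ ({y} : Set (H →L[ℂ] H))).topologicalClosure := by
  -- numerical range bound for `1 + x`
  have hxre : ∀ v : H, 0 ≤ RCLike.re (inner ℂ (x v) v : ℂ) := by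
    intro v
    have h2 := hx.2 v
    rw [reApplyInnerSelf_apply, add_apply, inner_add_left, map_add] at h2
    have : RCLike.re (inner ℂ ((adjoint x) v) v : ℂ) = RCLike.re (inner ℂ (x v) v : ℂ) := by
      rw [adjoint_inner_left, inner_re_symm]
    rw [this] at h2
    linarith
  have h1 : ∀ v : H, 1 * ‖v‖ ^ 2 ≤ RCLike.re (inner ℂ ((1 + x) v) v : ℂ) := by
    intro v
    rw [add_apply, ContinuousLinearMap.one_apply, inner_add_left, map_add, @inner_self_eq_norm_sq ℂ]
    have := hxre v
    linarith
  obtain ⟨hux, hinvx⟩ := key_inverse (1 + x) 1 one_pos h1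
  -- identify the adjoin of `1 + x` with that of `x`
  have hadj1 : Algebra.adjoin ℂ ({1 + x} : Set (H →L[ℂ] H)) =
      Algebra.adjoin ℂ ({x} : Set (H →L[ℂ] H)) := by
    apply le_antisymm
    · apply Algebra.adjoin_le
      rw [Set.singleton_subset_iff]
      exact add_mem (one_mem _) (Algebra.self_mem_adjoin_singleton ℂ x)
    · apply Algebra.adjoin_le
      rw [Set.singleton_subset_iff]
      simpa using sub_mem (Algebra.self_mem_adjoin_singleton ℂ (1 + x)) (one_mem _)
  rw [hadj1] at hinvx
  set u : (H →L[ℂ] H)ˣ := hux.unit with hudef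
  have huval : (u : H →L[ℂ] H) = 1 + x := hux.unit_spec
  have hinvu : Ring.inverse (1 + x) = (↑u⁻¹ : H →L[ℂ] H) := by
    rw [← huval, Ring.inverse_unit]
  have hy' : y = x * (↑u⁻¹ : H →L[ℂ] H) := by rw [hy, hinvu]
  -- 1 - y = u⁻¹
  have h1y : (1 : H →L[ℂ] H) - y = (↑u⁻¹ : H →L[ℂ] H) := by
    have := u.mul_inv
    rw [huval, add_mul, one_mul] at this
    rw [hy']
    exact sub_eq_of_eq_add this.symm
  have huy : IsUnit ((1 : H →L[ℂ] H) - y) := by rw [h1y]; exact u⁻¹.isUnit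
  -- Ring.inverse (1 - y) = 1 + x
  have hinv1y : Ring.inverse ((1 : H →L[ℂ] H) - y) = 1 + x := by
    rw [h1y, Ring.inverse_unit u⁻¹, inv_inv, huval]
  have hxy : x = y * Ring.inverse (1 - y) := by
    rw [hinv1y, hy', mul_assoc, ← huval, Units.inv_mul, mul_one]
  refine ⟨?_, hxy, ?_⟩
  · -- equality of closed nonunital algebras
    have hmemyx : y ∈ closure ((NonUnitalAlgebra.adjoin ℂ ({x} : Set (H →L[ℂ] H)) :
        Set (H →L[ℂ] H))) := by
      have hcont : Continuous fun a : H →L[ℂ] H => x * a := continuous_const.mul continuous_id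
      have hmaps : Set.MapsTo (fun a : H →L[ℂ] H => x * a)
          (Algebra.adjoin ℂ ({x} : Set (H →L[ℂ] H)) : Set (H →L[ℂ] H))
          (NonUnitalAlgebra.adjoin ℂ ({x} : Set (H →L[ℂ] H)) : Set (H →L[ℂ] H)) := by
        intro a ha
        exact nonunital_mul_adjoin_mem x a x ha (NonUnitalAlgebra.self_mem_adjoin_singleton ℂ x)
      have := map_mem_closure hcont hinvx hmaps
      rwa [← hy] at this
    have hmemxy : x ∈ closure ((NonUnitalAlgebra.adjoin ℂ ({y} : Set (H →L[ℂ] H)) :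
        Set (H →L[ℂ] H))) := by
      -- numerical range bound for 1 - y = u⁻¹
      set c : ℝ := 1 / (‖(1 : H →L[ℂ] H) + x‖ ^ 2 + 1) with hc
      have hcpos : 0 < c := by positivity
      have hbound : ∀ v : H, c * ‖v‖ ^ 2 ≤ RCLike.re (inner ℂ (((1 : H →L[ℂ] H) - y) v) v : ℂ) := by
        intro v
        set w : H := (↑u⁻¹ : H →L[ℂ] H) v with hw
        have hvw : v = (1 + x) w := by
          rw [hw, ← huval, ← ContinuousLinearMap.mul_apply, Units.mul_inv, ContinuousLinearMap.one_apply]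
        have happ : ((1 : H →L[ℂ] H) - y) v = w := by rw [h1y, hw]
        rw [happ]
        have hip : RCLike.re (inner ℂ w v : ℂ) = RCLike.re (inner ℂ ((1 + x) w) w : ℂ) := by
          conv_lhs => rw [hvw]
          rw [inner_re_symm]
        rw [hip]
        have h1w := h1 w
        have hnv : ‖v‖ ≤ ‖(1 : H →L[ℂ] H) + x‖ * ‖w‖ := by
          rw [hvw]; exact ((1 + x) : H →L[ℂ] H).le_opNorm w
        have hnv2 : ‖v‖ ^ 2 ≤ ‖(1 : H →L[ℂ] H) + x‖ ^ 2 * ‖w‖ ^ 2 := by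
          nlinarith [norm_nonneg v, norm_nonneg w, norm_nonneg ((1 : H →L[ℂ] H) + x)]
        have hcle : c * ‖v‖ ^ 2 ≤ ‖w‖ ^ 2 := by
          rw [hc]
          rw [div_mul_eq_mul_div, one_mul, div_le_iff₀ (by positivity)]
          nlinarith [norm_nonneg w, sq_nonneg (‖(1 : H →L[ℂ] H) + x‖)]
        linarith
      obtain ⟨_, hinvy⟩ := key_inverse ((1 : H →L[ℂ] H) - y) c hcpos hbound
      have hadj2 : Algebra.adjoin ℂ ({(1 : H →L[ℂ] H) - y} : Set (H →L[ℂ] H)) =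
          Algebra.adjoin ℂ ({y} : Set (H →L[ℂ] H)) := by
        apply le_antisymm
        · apply Algebra.adjoin_le
          rw [Set.singleton_subset_iff]
          exact sub_mem (one_mem _) (Algebra.self_mem_adjoin_singleton ℂ y)
        · apply Algebra.adjoin_le
          rw [Set.singleton_subset_iff]
          simpa using sub_mem (one_mem _) (Algebra.self_mem_adjoin_singleton ℂ (1 - y))
      rw [hadj2] at hinvy
      have hcont : Continuous fun a : H →L[ℂ] H => y * a := continuous_const.mul continuous_id
      have hmaps : Set.MapsTo (fun a : H →L[ℂ] H => y * a)
          (Algebra.adjoin ℂ ({y} : Set (H →L[ℂ] H)) : Set (H →L[ℂ] H))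
          (NonUnitalAlgebra.adjoin ℂ ({y} : Set (H →L[ℂ] H)) : Set (H →L[ℂ] H)) := by
        intro a ha
        exact nonunital_mul_adjoin_mem y a y ha (NonUnitalAlgebra.self_mem_adjoin_singleton ℂ y)
      have := map_mem_closure hcont hinvy hmaps
      rwa [← hxy] at this
    apply le_antisymm
    · apply NonUnitalSubalgebra.topologicalClosure_minimal
      · apply NonUnitalAlgebra.adjoin_le
        rw [Set.singleton_subset_iff]
        exact hmemxy
      · exact NonUnitalSubalgebra.isClosed_topologicalClosure _
    · apply NonUnitalSubalgebra.topologicalClosure_minimal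
      · apply NonUnitalAlgebra.adjoin_le
        rw [Set.singleton_subset_iff]
        exact hmemyx
      · exact NonUnitalSubalgebra.isClosed_topologicalClosure _
  · -- third conjunct: same computation as above
    set c : ℝ := 1 / (‖(1 : H →L[ℂ] H) + x‖ ^ 2 + 1) with hc
    have hcpos : 0 < c := by positivity
    have hbound : ∀ v : H, c * ‖v‖ ^ 2 ≤ RCLike.re (inner ℂ (((1 : H →L[ℂ] H) - y) v) v : ℂ) := by
      intro v
      set w : H := (↑u⁻¹ : H →L[ℂ] H) v with hw
      have hvw : v = (1 + x) w := by
        rw [hw, ← huval, ← ContinuousLinearMap.mul_apply, Units.mul_inv, ContinuousLinearMap.one_apply]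
      have happ : ((1 : H →L[ℂ] H) - y) v = w := by rw [h1y, hw]
      rw [happ]
      have hip : RCLike.re (inner ℂ w v : ℂ) = RCLike.re (inner ℂ ((1 + x) w) w : ℂ) := by
        conv_lhs => rw [hvw]
        rw [inner_re_symm]
      rw [hip]
      have h1w := h1 w
      have hnv : ‖v‖ ≤ ‖(1 : H →L[ℂ] H) + x‖ * ‖w‖ := by
        rw [hvw]; exact ((1 + x) : H →L[ℂ] H).le_opNorm w
      have hnv2 : ‖v‖ ^ 2 ≤ ‖(1 : H →L[ℂ] H) + x‖ ^ 2 * ‖w‖ ^ 2 := by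
        nlinarith [norm_nonneg v, norm_nonneg w, norm_nonneg ((1 : H →L[ℂ] H) + x)]
      have hcle : c * ‖v‖ ^ 2 ≤ ‖w‖ ^ 2 := by
        rw [hc]
        rw [div_mul_eq_mul_div, one_mul, div_le_iff₀ (by positivity)]
        nlinarith [norm_nonneg w, sq_nonneg (‖(1 : H →L[ℂ] H) + x‖)]
      linarith
    obtain ⟨_, hinvy⟩ := key_inverse ((1 : H →L[ℂ] H) - y) c hcpos hbound
    have hadj2 : Algebra.adjoin ℂ ({(1 : H →L[ℂ] H) - y} : Set (H →L[ℂ] H)) =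
        Algebra.adjoin ℂ ({y} : Set (H →L[ℂ] H)) := by
      apply le_antisymm
      · apply Algebra.adjoin_le
        rw [Set.singleton_subset_iff]
        exact sub_mem (one_mem _) (Algebra.self_mem_adjoin_singleton ℂ y)
      · apply Algebra.adjoin_le
        rw [Set.singleton_subset_iff]
        simpa using sub_mem (one_mem _) (Algebra.self_mem_adjoin_singleton ℂ (1 - y))
    rwa [hadj2] at hinvy
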